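/- Let G₁ and G₂ be finite simple graphs whose vertex sets intersect in exactly one vertex x. If every maximum minimal vertex cover of G₁ contains x and every maximum minimal vertex cover of G₂ contains x, then for any such covers C₁, C₂ the set C₁ ∪ C₂ is a maximum minimal vertex cover of G₁ ∪ G₂, and every maximum minimal vertex cover of G₁ ∪ G₂ contains x. -/

import Mathlib

open SimpleGraph MvPolynomial

/-- `C` is a vertex cover of `G`. -/
def IsVC {V : Type*} (G : SimpleGraph V) (C : Set V) : Prop :=
  ∀ ⦃u v : V⦄, G.Adj u v → u ∈ C ∨ v ∈ C

/-- `C` is a minimal vertex cover of `G`. -/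
def IsMinVC {V : Type*} (G : SimpleGraph V) (C : Set V) : Prop :=
  IsVC G C ∧ ∀ D ⊂ C, ¬ IsVC G D

/-- `C` is a maximum minimal vertex cover of `G`. -/
def IsMaxMinVC {V : Type*} [Fintype V] (G : SimpleGraph V) (C : Set V) : Prop :=
  IsMinVC G C ∧ ∀ D : Set V, IsMinVC G D → D.ncard ≤ C.ncard

section Aux

variable {V : Type*}

/-- Every vertex of a minimal vertex cover has a private neighbour outside the cover. -/
lemma priv1 {G : SimpleGraph V} {C : Set V} (h : IsMinVC G C) {v : V} (hv : v ∈ C) :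
    ∃ u, G.Adj v u ∧ u ∉ C := by
  by_contra hno
  push_neg at hno
  apply h.2 (C \ {v}) (Set.sdiff_singleton_ssubset.mpr hv)
  intro a b hab
  rcases h.1 hab with ha | hb
  · by_cases hav : a = v
    · subst hav
      right
      exact ⟨hno b hab, fun hb1 => G.loopless.irrefl a (Set.mem_singleton_iff.mp hb1 ▸ hab)⟩
    · exact Or.inl ⟨ha, hav⟩
  · by_cases hbv : b = v
    · subst hbv
      left
      exact ⟨hno a hab.symm, fun ha1 => G.loopless.irrefl b (Set.mem_singleton_iff.mp ha1 ▸ hab).symm⟩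
    · exact Or.inr ⟨hb, hbv⟩

/-- Conversely, a cover whose every vertex has a private neighbour is minimal. -/
lemma priv2 {G : SimpleGraph V} {C : Set V} (hvc : IsVC G C)
    (hp : ∀ v ∈ C, ∃ u, G.Adj v u ∧ u ∉ C) : IsMinVC G C := by
  refine ⟨hvc, ?_⟩
  intro D hD hDvc
  obtain ⟨v, hvC, hvD⟩ := Set.exists_of_ssubset hD
  obtain ⟨u, hadj, huC⟩ := hp v hvC
  rcases hDvc hadj with h | h
  · exact hvD h
  · exact huC (hD.1 h)

lemma minVC_subset_support {G : SimpleGraph V} {C : Set V} (h : IsMinVC G C) :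
    C ⊆ G.support := fun v hv => by
  obtain ⟨u, hu, -⟩ := priv1 h hv
  exact ⟨u, hu⟩

lemma exists_minVC [Fintype V] (G : SimpleGraph V) : ∃ C, IsMinVC G C := by
  classical
  have hex : ∃ n, ∃ C : Set V, IsVC G C ∧ C.ncard = n :=
    ⟨(Set.univ : Set V).ncard, Set.univ, fun u v _ => Or.inl trivial, rfl⟩
  obtain ⟨C, hC, hcard⟩ := Nat.find_spec hex
  refine ⟨C, hC, ?_⟩
  intro D hD hDvc
  have h1 : Nat.find hex ≤ D.ncard := Nat.find_le ⟨D, hDvc, rfl⟩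
  have h2 : D.ncard < C.ncard := Set.ncard_lt_ncard hD (Set.toFinite C)
  omega

lemma exists_maxMinVC [Fintype V] (G : SimpleGraph V) : ∃ C, IsMaxMinVC G C := by
  classical
  obtain ⟨C0, hC0⟩ := exists_minVC G
  have hbound : ∀ E : Set V, IsMinVC G E → E.ncard ≤ Fintype.card V := by
    intro E _
    calc E.ncard ≤ (Set.univ : Set V).ncard :=
          Set.ncard_le_ncard (Set.subset_univ E) Set.finite_univ
      _ = Fintype.card V := by rw [Set.ncard_univ, Nat.card_eq_fintype_card]
  obtain ⟨C, hC, hcard⟩ := Nat.findGreatest_spec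
    (P := fun n => ∃ C : Set V, IsMinVC G C ∧ C.ncard = n)
    (hbound C0 hC0) ⟨C0, hC0, rfl⟩
  refine ⟨C, hC, ?_⟩
  intro D hD
  have := Nat.le_findGreatest
    (P := fun n => ∃ C : Set V, IsMinVC G C ∧ C.ncard = n)
    (n := Fintype.card V) (hbound D hD) ⟨D, hD, rfl⟩
  omega

/-- Key counting lemma for one side of the gluing. -/
lemma key [Fintype V] (G₁ G₂ : SimpleGraph V) (x : V)
    (hx : G₁.support ∩ G₂.support = {x})
    (hall₁ : ∀ C₁ : Set V, IsMaxMinVC G₁ C₁ → x ∈ C₁)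
    {C₁ : Set V} (hC₁ : IsMaxMinVC G₁ C₁)
    {D : Set V} (hD : IsMinVC (G₁ ⊔ G₂) D) :
    (D ∩ G₁.support).ncard ≤ C₁.ncard ∧
      (x ∉ D → (D ∩ G₁.support).ncard + 1 ≤ C₁.ncard) := by
  set D₁ := D ∩ G₁.support with hD₁def
  have hvc₁ : IsVC G₁ D₁ := by
    intro u v huv
    rcases hD.1 ((sup_adj G₁ G₂ u v).mpr (Or.inl huv)) with h | h
    · exact Or.inl ⟨h, v, huv⟩
    · exact Or.inr ⟨h, u, huv.symm⟩
  have hpriv : ∀ v ∈ D₁, v ≠ x → ∃ u, G₁.Adj v u ∧ u ∉ D₁ := by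
    rintro v ⟨hvD, hvs⟩ hvx
    obtain ⟨u, hadj, huD⟩ := priv1 hD hvD
    rcases (sup_adj G₁ G₂ v u).mp hadj with h1 | h2
    · exact ⟨u, h1, fun hu => huD hu.1⟩
    · exact absurd (show v ∈ ({x} : Set V) from hx ▸ ⟨hvs, u, h2⟩) hvx
  have hlt : ∀ E : Set V, IsMinVC G₁ E → x ∉ E → E.ncard + 1 ≤ C₁.ncard := by
    intro E hE hxE
    by_contra h
    push_neg at h
    have hmax : IsMaxMinVC G₁ E := ⟨hE, fun F hF => by have := hC₁.2 F hF; omega⟩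
    exact hxE (hall₁ E hmax)
  by_cases hcase : x ∈ D₁ ∧ ∀ u, G₁.Adj x u → u ∈ D₁
  · obtain ⟨hxD₁, hnb⟩ := hcase
    have hvc' : IsVC G₁ (D₁ \ {x}) := by
      intro u v huv
      rcases hvc₁ huv with h | h
      · by_cases hux : u = x
        · subst hux
          exact Or.inr ⟨hnb v huv, fun hv => G₁.loopless.irrefl u (Set.mem_singleton_iff.mp hv ▸ huv)⟩
        · exact Or.inl ⟨h, hux⟩
      · by_cases hvx : v = x
        · subst hvx
          exact Or.inl ⟨hnb u huv.symm,
            fun hu => G₁.loopless.irrefl v (Set.mem_singleton_iff.mp hu ▸ huv).symm⟩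
        · exact Or.inr ⟨h, hvx⟩
    have hmin' : IsMinVC G₁ (D₁ \ {x}) := by
      apply priv2 hvc'
      rintro v ⟨hv1, hv2⟩
      obtain ⟨u, h1, h2⟩ := hpriv v hv1 hv2
      exact ⟨u, h1, fun hu => h2 hu.1⟩
    have h1 := hlt _ hmin' (by simp)
    have h2 : (D₁ \ {x}).ncard + 1 = D₁.ncard :=
      Set.ncard_diff_singleton_add_one hxD₁ (Set.toFinite D₁)
    exact ⟨by omega, fun hxD => (hxD hxD₁.1).elim⟩
  · have hmin : IsMinVC G₁ D₁ := by
      apply priv2 hvc₁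
      intro v hv
      by_cases hvx : v = x
      · subst hvx
        push_neg at hcase
        exact hcase hv
      · exact hpriv v hv hvx
    exact ⟨hC₁.2 _ hmin, fun hxD => hlt _ hmin fun h => hxD h.1⟩

end Aux

/-- Case (i) of the gluing lemma: if every maximum minimal vertex cover of `G₁` and of
`G₂` contains the unique common vertex `x`, then for any such covers `C₁`, `C₂` the
union `C₁ ∪ C₂` is a maximum minimal vertex cover of `G₁ ∪ G₂`, and every maximum
minimal vertex cover of `G₁ ∪ G₂` contains `x`. -/
theorem stmt_4 {V : Type*} [Fintype V] (G₁ G₂ : SimpleGraph V) (x : V)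
    (hx : G₁.support ∩ G₂.support = {x})
    (hall₁ : ∀ C₁ : Set V, IsMaxMinVC G₁ C₁ → x ∈ C₁)
    (hall₂ : ∀ C₂ : Set V, IsMaxMinVC G₂ C₂ → x ∈ C₂) :
    (∀ C₁ C₂ : Set V, IsMaxMinVC G₁ C₁ → IsMaxMinVC G₂ C₂ →
        IsMaxMinVC (G₁ ⊔ G₂) (C₁ ∪ C₂)) ∧
      (∀ C : Set V, IsMaxMinVC (G₁ ⊔ G₂) C → x ∈ C) := by
  have hx' : G₂.support ∩ G₁.support = {x} := by rw [Set.inter_comm]; exact hx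
  have hxmem : x ∈ G₁.support ∩ G₂.support := hx ▸ Set.mem_singleton x
  have hswap : G₂ ⊔ G₁ = G₁ ⊔ G₂ := sup_comm G₂ G₁
  -- decomposition of any minimal cover of the union
  have hdecomp : ∀ D : Set V, IsMinVC (G₁ ⊔ G₂) D →
      D.ncard + ((D ∩ G₁.support) ∩ (D ∩ G₂.support)).ncard
        = (D ∩ G₁.support).ncard + (D ∩ G₂.support).ncard := by
    intro D hD
    have hsub : D ⊆ G₁.support ∪ G₂.support := by
      intro v hv
      obtain ⟨u, hadj, -⟩ := priv1 hD hv
      rcases (sup_adj G₁ G₂ v u).mp hadj with h | h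
      · exact Or.inl ⟨u, h⟩
      · exact Or.inr ⟨u, h⟩
    have hDeq : (D ∩ G₁.support) ∪ (D ∩ G₂.support) = D := by
      rw [← Set.inter_union_distrib_left]
      exact Set.inter_eq_left.mpr hsub
    have := Set.ncard_union_add_ncard_inter (D ∩ G₁.support) (D ∩ G₂.support)
      (Set.toFinite _) (Set.toFinite _)
    rw [hDeq] at this
    exact this
  have part1 : ∀ C₁ C₂ : Set V, IsMaxMinVC G₁ C₁ → IsMaxMinVC G₂ C₂ →
      IsMaxMinVC (G₁ ⊔ G₂) (C₁ ∪ C₂) := by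
    intro C₁ C₂ h₁ h₂
    have hx₁ := hall₁ C₁ h₁
    have hx₂ := hall₂ C₂ h₂
    have hinter : C₁ ∩ C₂ = {x} := by
      apply Set.Subset.antisymm
      · rintro v ⟨hv1, hv2⟩
        exact hx ▸ ⟨minVC_subset_support h₁.1 hv1, minVC_subset_support h₂.1 hv2⟩
      · intro v hv
        rw [Set.mem_singleton_iff] at hv
        subst hv
        exact ⟨hx₁, hx₂⟩
    have hucard : (C₁ ∪ C₂).ncard + 1 = C₁.ncard + C₂.ncard := by
      have := Set.ncard_union_add_ncard_inter C₁ C₂ (Set.toFinite _) (Set.toFinite _)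
      rw [hinter] at this
      simpa using this
    have hminU : IsMinVC (G₁ ⊔ G₂) (C₁ ∪ C₂) := by
      apply priv2
      · intro u v huv
        rcases (sup_adj G₁ G₂ u v).mp huv with h | h
        · rcases h₁.1.1 h with hc | hc
          · exact Or.inl (Or.inl hc)
          · exact Or.inr (Or.inl hc)
        · rcases h₂.1.1 h with hc | hc
          · exact Or.inl (Or.inr hc)
          · exact Or.inr (Or.inr hc)
      · intro v hv
        rcases hv with hv | hv
        · obtain ⟨u, hadj, huC⟩ := priv1 h₁.1 hv
          have hu2 : u ∉ C₂ := by
            intro hu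
            have hux : u ∈ ({x} : Set V) :=
              hx ▸ ⟨⟨v, hadj.symm⟩, minVC_subset_support h₂.1 hu⟩
            rw [Set.mem_singleton_iff] at hux
            exact huC (hux ▸ hx₁)
          exact ⟨u, (sup_adj G₁ G₂ v u).mpr (Or.inl hadj), fun h => h.elim huC hu2⟩
        · obtain ⟨u, hadj, huC⟩ := priv1 h₂.1 hv
          have hu1 : u ∉ C₁ := by
            intro hu
            have hux : u ∈ ({x} : Set V) :=
              hx ▸ ⟨minVC_subset_support h₁.1 hu, ⟨v, hadj.symm⟩⟩
            rw [Set.mem_singleton_iff] at hux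
            exact huC (hux ▸ hx₂)
          exact ⟨u, (sup_adj G₁ G₂ v u).mpr (Or.inr hadj), fun h => h.elim hu1 huC⟩
    refine ⟨hminU, ?_⟩
    intro D hD
    have k₁ := key G₁ G₂ x hx hall₁ h₁ hD
    have hD' : IsMinVC (G₂ ⊔ G₁) D := hswap ▸ hD
    have k₂ := key G₂ G₁ x hx' hall₂ h₂ hD'
    have hd := hdecomp D hD
    by_cases hxD : x ∈ D
    · have hpos : 0 < ((D ∩ G₁.support) ∩ (D ∩ G₂.support)).ncard := by
        rw [Set.ncard_pos (Set.toFinite _)]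
        exact ⟨x, ⟨hxD, hxmem.1⟩, ⟨hxD, hxmem.2⟩⟩
      have := k₁.1
      have := k₂.1
      omega
    · have := k₁.2 hxD
      have := k₂.1
      omega
  refine ⟨part1, ?_⟩
  intro C hC
  by_contra hxC
  obtain ⟨C₁, h₁⟩ := exists_maxMinVC G₁
  obtain ⟨C₂, h₂⟩ := exists_maxMinVC G₂
  have hx₁ := hall₁ C₁ h₁
  have hx₂ := hall₂ C₂ h₂
  have hinter : C₁ ∩ C₂ = {x} := by
    apply Set.Subset.antisymm
    · rintro v ⟨hv1, hv2⟩
      exact hx ▸ ⟨minVC_subset_support h₁.1 hv1, minVC_subset_support h₂.1 hv2⟩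
    · intro v hv
      rw [Set.mem_singleton_iff] at hv
      subst hv
      exact ⟨hx₁, hx₂⟩
  have hucard : (C₁ ∪ C₂).ncard + 1 = C₁.ncard + C₂.ncard := by
    have := Set.ncard_union_add_ncard_inter C₁ C₂ (Set.toFinite _) (Set.toFinite _)
    rw [hinter] at this
    simpa using this
  have hU := part1 C₁ C₂ h₁ h₂
  have hle : (C₁ ∪ C₂).ncard ≤ C.ncard := hC.2 _ hU.1
  have k₁ := (key G₁ G₂ x hx hall₁ h₁ hC.1).2 hxC
  have hC' : IsMinVC (G₂ ⊔ G₁) C := hswap ▸ hC.1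
  have k₂ := (key G₂ G₁ x hx' hall₂ h₂ hC').2 hxC
  have hd := hdecomp C hC.1
  omega
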